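/- arXiv:2208.06086 — 3 statements merged into one kernel-verified Lean document; each statement's English description precedes it below -/
import Mathlib

section
/- Let m = 2^k with k ≥ 4. Then the odd part of (2m)!, namely (2m)!/2^{2m−1}, is congruent to 11 modulo 64. -/
open Finset Nat

set_option maxRecDepth 10000 in
lemma odd64_prod32 : ∀ x : ZMod 64, (∏ i ∈ range 32, (2 * x + (2 * i + 3))) = 1 := by
  decide

lemma doubleFac_unfold (n : ℕ) :
    ∀ t : ℕ, (2 * n + 1 + 2 * t)‼ = (∏ i ∈ range t, (2 * n + (2 * i + 3))) * (2 * n + 1)‼ := by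
  intro t
  induction t with
  | zero => simp
  | succ t ih =>
    have h : 2 * n + 1 + 2 * (t + 1) = (2 * n + 1 + 2 * t) + 2 := by ring
    rw [h, Nat.doubleFactorial_add_two, ih, Finset.prod_range_succ]
    ring

lemma doubleFac_64 : ∀ s : ℕ, (64 * s + 63)‼ % 64 = 1 := by
  intro s
  induction s with
  | zero => decide
  | succ s ih =>
    have h1 : 64 * (s + 1) + 63 = 2 * (32 * s + 31) + 1 + 2 * 32 := by ring
    have h2 : 2 * (32 * s + 31) + 1 = 64 * s + 63 := by ring
    have key := doubleFac_unfold (32 * s + 31) 32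
    rw [h2] at key
    have hz : ((64 * (s + 1) + 63)‼ : ZMod 64) = 1 := by
      rw [h1, h2, key]
      push_cast
      have hp : (∏ i ∈ range 32, (2 * (((32 * s + 31 : ℕ) : ZMod 64)) + (2 * (i : ℕ) + 3)))
          = 1 := odd64_prod32 _
      rw [← ZMod.natCast_mod ((64 * s + 63)‼) 64, ih]
      push_cast at hp ⊢
      rw [hp]
      ring
    have := (ZMod.natCast_eq_natCast_iff ((64 * (s + 1) + 63)‼) 1 64).mp (by rw [Nat.cast_one]; exact hz)
    simpa [Nat.ModEq] using this

lemma two_mul_fac (n : ℕ) (hn : 1 ≤ n) :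
    (2 * n)! = 2 ^ n * n ! * (2 * n - 1)‼ := by
  have h : 2 * n = (2 * n - 1) + 1 := by omega
  rw [h, Nat.factorial_eq_mul_doubleFactorial, ← h, Nat.doubleFactorial_two_mul]

lemma aux_pow (j : ℕ) (hj : 5 ≤ j) :
    ∃ A, (2 ^ j)! = 2 ^ (2 ^ j - 1) * A ∧ A % 64 = 11 := by
  induction j, hj using Nat.le_induction with
  | base => exact ⟨122529844256906551386796875, by decide, by decide⟩
  | succ j hj ih =>
    obtain ⟨A, hA, hA64⟩ := ih
    set n := 2 ^ j with hn
    have hpos : 1 ≤ n := Nat.one_le_two_pow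
    have h2n : 2 * n = 2 ^ (j + 1) := by rw [hn, pow_succ]; ring
    have h64 : 2 ^ (j + 1) = 64 * 2 ^ (j - 5) := by
      rw [show j + 1 = 6 + (j - 5) by omega, pow_add]; norm_num
    have hsub : 1 ≤ 2 ^ (j - 5) := Nat.one_le_two_pow
    have hDidx : 2 * n - 1 = 64 * (2 ^ (j - 5) - 1) + 63 := by omega
    have hD : (2 * n - 1)‼ % 64 = 1 := by rw [hDidx]; exact doubleFac_64 _
    refine ⟨A * (2 * n - 1)‼, ?_, ?_⟩
    · rw [← h2n, two_mul_fac n hpos, hA]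
      have hexp : n + (n - 1) = 2 * n - 1 := by omega
      calc 2 ^ n * (2 ^ (n - 1) * A) * (2 * n - 1)‼
          = 2 ^ (n + (n - 1)) * (A * (2 * n - 1)‼) := by rw [pow_add]; ring
        _ = 2 ^ (2 * n - 1) * (A * (2 * n - 1)‼) := by rw [hexp]
    · rw [Nat.mul_mod, hA64, hD]

/-- For `m = 2^k` with `k ≥ 4`, the odd part `(2m)! / 2^(2m-1)` is `≡ 11 (mod 64)`. -/
theorem odd_part_factorial_mod_64 (k m : ℕ) (hk : 4 ≤ k) (hm : m = 2 ^ k) :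
    Nat.factorial (2 * m) / 2 ^ (2 * m - 1) % 64 = 11 := by
  obtain ⟨A, hA, hA64⟩ := aux_pow (k + 1) (by omega)
  have h2m : 2 * m = 2 ^ (k + 1) := by rw [hm, pow_succ]; ring
  rw [h2m, hA, Nat.mul_div_cancel_left _ (pow_pos (by norm_num) _), hA64]
end

section
/- Let m = 2^k with k ≥ 4. Then the central binomial coefficient C(2m, m) is congruent to 6 modulo 8. -/
open Finset

private lemma cbe_aux : ∀ k : ℕ, 1 ≤ k → ((2 ^ (k + 1)).choose (2 ^ k) : ZMod 8) = 6 := by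
  intro k hk
  induction k, hk using Nat.le_induction with
  | base => decide
  | succ k hk ih =>
    set m : ℕ := 2 ^ (k + 1) with hm
    have hmk : m = 2 * 2 ^ k := by rw [hm]; ring
    have hvdm : (2 ^ (k + 2)).choose m
        = ∑ ij ∈ Finset.HasAntidiagonal.antidiagonal m, m.choose ij.1 * m.choose ij.2 := by
      rw [show (2 : ℕ) ^ (k + 2) = m + m by rw [hm]; ring]
      exact Nat.add_choose_eq m m m
    have hsum : ((2 ^ (k + 2)).choose m : ZMod 8)
        = ∑ i ∈ Finset.range (m + 1), (m.choose i : ZMod 8) ^ 2 := by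
      rw [hvdm]
      push_cast
      rw [Finset.Nat.sum_antidiagonal_eq_sum_range_succ_mk]
      refine Finset.sum_congr rfl fun i hi => ?_
      have hi' : i ≤ m := by simpa [Nat.lt_succ_iff] using hi
      rw [Nat.choose_symm hi', sq]
    rw [hsum]
    have hm1 : 1 ≤ m := Nat.one_le_two_pow
    -- split off i = m, i = 0, i = 2^k
    rw [Finset.sum_range_succ, Finset.range_eq_Ico,
      Finset.sum_eq_sum_Ico_succ_bot (by omega : 0 < m)]
    have h2k_mem : 2 ^ k ∈ Finset.Ico 1 m := by
      simp only [Finset.mem_Ico]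
      constructor
      · exact Nat.one_le_two_pow
      · omega
    rw [← Finset.add_sum_erase _ _ h2k_mem]
    have hmid : (m.choose (2 ^ k) : ZMod 8) = 6 := ih
    have hrest : ∑ i ∈ (Finset.Ico 1 m).erase (2 ^ k),
        (m.choose i : ZMod 8) ^ 2 = 0 := by
      refine Finset.sum_involution (fun i _ => m - i) ?_ ?_ ?_ ?_
      · intro i hi
        simp only [Finset.mem_erase, Finset.mem_Ico] at hi
        have hile : i ≤ m := by omega
        have heven : 2 ∣ m.choose i := by
          rw [hm]
          exact Nat.Prime.dvd_choose_pow Nat.prime_two (by omega) (by omega)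
        obtain ⟨c, hc⟩ := heven
        rw [Nat.choose_symm hile, ← two_mul, hc]
        push_cast
        ring_nf
        rw [show (8 : ZMod 8) = 0 by decide, mul_zero]
      · intro i hi _
        simp only [Finset.mem_erase, Finset.mem_Ico] at hi
        try dsimp only
        omega
      · intro i hi
        simp only [Finset.mem_erase, Finset.mem_Ico] at hi ⊢
        try dsimp only
        omega
      · intro i hi
        simp only [Finset.mem_erase, Finset.mem_Ico] at hi
        try dsimp only
        omega
    rw [hrest, hmid]
    norm_num [Nat.choose_self, Nat.choose_zero_right]
    decide

/-- For `m = 2^k` with `k ≥ 4`, the central binomial coefficient `C(2m, m) ≡ 6 (mod 8)`. -/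
theorem central_binom_mod_eight (k m : ℕ) (hk : 4 ≤ k) (hm : m = 2 ^ k) :
    Nat.choose (2 * m) m % 8 = 6 := by
  have h := cbe_aux k (by omega)
  rw [hm, show 2 * 2 ^ k = 2 ^ (k + 1) by ring]
  have := ZMod.val_natCast (n := 8) ((2 ^ (k + 1)).choose (2 ^ k))
  rw [h] at this
  exact this.symm.trans (by decide)
end

section
/- Let k ≥ 4 and let D be the product of all odd primes p such that p − 1 divides 2^{k+1}. Then D ≡ −1 modulo 64. -/
lemma aux_mod64 (k : ℕ) {p : ℕ} (hp : p.Prime) (hodd : Odd p)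
    (hdvd : p - 1 ∣ 2 ^ (k + 1)) (h3 : p ≠ 3) (h5 : p ≠ 5) (h17 : p ≠ 17) :
    p % 64 = 1 := by
  obtain ⟨m, hm, hpm⟩ := (Nat.dvd_prime_pow Nat.prime_two).mp hdvd
  have h2 : 2 ≤ p := hp.two_le
  have hpe : p = 2 ^ m + 1 := by omega
  have hoddm : p % 2 = 1 := Nat.odd_iff.mp hodd
  by_cases hm5 : m ≤ 5
  · subst hpe
    interval_cases m <;> revert hp <;> simp_all <;> decide
  · have hdvd64 : (2:ℕ) ^ 6 ∣ 2 ^ m := pow_dvd_pow 2 (by omega)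
    obtain ⟨t, ht⟩ := hdvd64
    omega

/-- For `k ≥ 4`, the product of all odd primes `p` with `p - 1 ∣ 2^(k+1)`
is `≡ -1 (mod 64)`. -/
theorem clausen_staudt_denominator_mod_64 (k : ℕ) (hk : 4 ≤ k) :
    (∏ p ∈ (Finset.range (2 ^ (k + 1) + 2)).filter
        (fun p => p.Prime ∧ Odd p ∧ p - 1 ∣ 2 ^ (k + 1)), p) % 64 = 63 := by
  set S := (Finset.range (2 ^ (k + 1) + 2)).filter
      (fun p => p.Prime ∧ Odd p ∧ p - 1 ∣ 2 ^ (k + 1)) with hS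
  have hpow : 32 ≤ 2 ^ (k + 1) := by
    calc (32:ℕ) = 2 ^ 5 := by norm_num
    _ ≤ 2 ^ (k+1) := Nat.pow_le_pow_right (by norm_num) (by omega)
  have h3 : (3:ℕ) ∈ S := by
    simp only [hS, Finset.mem_filter, Finset.mem_range]
    exact ⟨by omega, by norm_num, by decide, by simpa using pow_dvd_pow 2 (show 1 ≤ k+1 by omega)⟩
  have h5 : (5:ℕ) ∈ S := by
    simp only [hS, Finset.mem_filter, Finset.mem_range]
    exact ⟨by omega, by norm_num, by decide, by exact (pow_dvd_pow 2 (show 2 ≤ k+1 by omega) : 2 ^ 2 ∣ 2 ^ (k + 1))⟩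
  have h17 : (17:ℕ) ∈ S := by
    simp only [hS, Finset.mem_filter, Finset.mem_range]
    exact ⟨by omega, by norm_num, by decide, by exact (pow_dvd_pow 2 (show 4 ≤ k+1 by omega) : 2 ^ 4 ∣ 2 ^ (k + 1))⟩
  have hsub : ({3,5,17} : Finset ℕ) ⊆ S := by
    intro x hx
    fin_cases hx <;> assumption
  have hsplit := Finset.prod_sdiff (f := fun p => p) hsub
  have hprod3 : (∏ p ∈ ({3,5,17} : Finset ℕ), p) = 255 := by decide
  have hT : ∀ p ∈ S \ ({3,5,17} : Finset ℕ), p % 64 = 1 := by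
    intro p hp
    simp only [hS, Finset.mem_sdiff, Finset.mem_filter, Finset.mem_insert,
      Finset.mem_singleton] at hp
    obtain ⟨⟨-, hpp, hpo, hpd⟩, hne⟩ := hp
    exact aux_mod64 k hpp hpo hpd (by tauto) (by tauto) (by tauto)
  have hTmod : (∏ p ∈ S \ ({3,5,17} : Finset ℕ), p) % 64 = 1 := by
    rw [Finset.prod_nat_mod]
    rw [Finset.prod_congr rfl hT]
    simp
  rw [← hsplit, hprod3, Nat.mul_mod, hTmod]
end
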